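/- Let k be a natural number and let t, r : (Fin k → WithBot ℕ) → (Fin k → WithBot ℕ) be monotone functions with x ≤ r (t x) for all x (so (t, r) is a pseudo-retraction of the domain onto itself). Then r ∘ t is the identity and t is strict: t ⊥ = ⊥, where ⊥ is the everywhere-bottom element. -/

import Mathlib

/-- The flat domain of natural numbers: the carrier is `WithBot ℕ`, ordered so
that `⊥` is below every numeral and distinct numerals are incomparable. -/
def FlatNat : Type := WithBot ℕ

namespace FlatNat

instance : PartialOrder FlatNat where
  le a b := a = (⊥ : WithBot ℕ) ∨ a = b
  le_refl a := Or.inr rfl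
  le_trans a b c hab hbc := by
    rcases hab with h | h
    · exact Or.inl h
    · rw [h]; exact hbc
  le_antisymm a b hab hba := by
    rcases hab with h | h
    · rcases hba with h' | h'
      · rw [h, h']
      · exact h'.symm
    · exact h

instance : OrderBot FlatNat where
  bot := (⊥ : WithBot ℕ)
  bot_le a := Or.inl rfl

end FlatNat

instance : DecidableEq FlatNat := inferInstanceAs (DecidableEq (WithBot ℕ))

lemma FlatNat.le_iff {a b : FlatNat} : a ≤ b ↔ a = (⊥ : FlatNat) ∨ a = b := Iff.rfl

lemma FlatNat.coe_ne_bot (n : ℕ) : ((n : WithBot ℕ) : FlatNat) ≠ (⊥ : FlatNat) :=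
  WithBot.coe_ne_bot

/-- The number of defined (non-bottom) components. -/
def rankAux {k : ℕ} (y : Fin k → FlatNat) : ℕ :=
  (Finset.univ.filter fun j => y j ≠ ⊥).card

lemma rankAux_le {k : ℕ} (y : Fin k → FlatNat) : rankAux y ≤ k := by
  calc rankAux y ≤ Finset.univ.card := Finset.card_filter_le _ _
    _ = k := by simp

lemma rankAux_strictMono {k : ℕ} {a b : Fin k → FlatNat} (hab : a < b) :
    rankAux a < rankAux b := by
  apply Finset.card_lt_card
  constructor
  · intro j hj
    simp only [Finset.mem_filter, Finset.mem_univ, true_and] at hj ⊢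
    rcases FlatNat.le_iff.mp (hab.le j) with h | h
    · exact absurd h hj
    · rw [← h]; exact hj
  · intro hsub
    apply hab.ne
    funext j
    rcases FlatNat.le_iff.mp (hab.le j) with h | h
    · by_cases hbj : b j = ⊥
      · rw [h, hbj]
      · have hmem : j ∈ Finset.univ.filter (fun j => b j ≠ ⊥) := by
          simp [hbj]
        have := hsub hmem
        simp only [Finset.mem_filter, Finset.mem_univ, true_and] at this
        exact absurd h this
    · exact h

lemma rankAux_eq_zero {k : ℕ} {y : Fin k → FlatNat} (h : rankAux y = 0) :
    y = ⊥ := by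
  funext j
  show y j = (⊥ : FlatNat)
  by_contra hj
  have hmem : j ∈ Finset.univ.filter (fun j => y j ≠ ⊥) := by simp [hj]
  have : (Finset.univ.filter fun j => y j ≠ (⊥ : FlatNat)).Nonempty := ⟨j, hmem⟩
  have hpos := Finset.card_pos.mpr this
  simp only [rankAux] at h
  omega

/-- A chain of elements of increasing rank. -/
def chainAux (k m : ℕ) : Fin k → FlatNat :=
  fun j => if (j : ℕ) < m then ((0 : ℕ) : WithBot ℕ) else ⊥

lemma chainAux_zero (k : ℕ) : chainAux k 0 = ⊥ := by
  funext j
  simp [chainAux]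

lemma chainAux_lt {k m : ℕ} (hm : m < k) : chainAux k m < chainAux k (m + 1) := by
  apply lt_of_le_of_ne
  · intro j
    by_cases h : (j : ℕ) < m
    · right
      simp [chainAux, h, Nat.lt_succ_of_lt h]; rfl
    · left
      simp [chainAux, h]; rfl
  · intro heq
    have := congrFun heq ⟨m, hm⟩
    simp [chainAux] at this
    exact FlatNat.coe_ne_bot 0 this.symm

/-- Any pseudo-retraction of the `k`-fold product of the flat domain of natural
numbers onto itself is an actual retraction, and its section is strict. -/
theorem pseudo_retraction_strict (k : ℕ)
    (t r : (Fin k → FlatNat) → (Fin k → FlatNat))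
    (ht : Monotone t) (hr : Monotone r) (hret : ∀ x, x ≤ r (t x)) :
    r ∘ t = id ∧ t ⊥ = ⊥ := by
  -- Step 1: on maximal elements, r ∘ t is the identity.
  have hmax : ∀ y : Fin k → FlatNat, (∀ j, y j ≠ ⊥) → r (t y) = y := by
    intro y hy
    funext j
    rcases FlatNat.le_iff.mp (hret y j) with h | h
    · exact absurd h (hy j)
    · exact h.symm
  -- Step 2: r ∘ t = id everywhere.
  have key : ∀ x, r (t x) = x := by
    intro x
    funext i
    rcases FlatNat.le_iff.mp (hret x i) with hbi | heq
    · -- x i = ⊥; show r (t x) i = ⊥ too.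
      rw [hbi]
      set xn : ℕ → Fin k → FlatNat := fun n j =>
        if x j = ⊥ then (if j = i then ((n : ℕ) : WithBot ℕ) else ((0 : ℕ) : WithBot ℕ))
        else x j with hxn
      have hle : ∀ n, x ≤ xn n := by
        intro n j
        by_cases h : x j = ⊥
        · exact Or.inl h
        · right; simp [hxn, h]
      have hne : ∀ n j, xn n j ≠ (⊥ : FlatNat) := by
        intro n j
        by_cases h : x j = ⊥
        · by_cases h2 : j = i
          · subst h2
            simp [hxn, h]; exact FlatNat.coe_ne_bot n
          · simp [hxn, h, h2]; exact FlatNat.coe_ne_bot 0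
        · simpa [hxn, h] using h
      have hxni : ∀ n, xn n i = ((n : ℕ) : WithBot ℕ) := by
        intro n; simp [hxn, hbi]; rfl
      have hcn : ∀ n : ℕ, r (t x) i = (⊥ : FlatNat) ∨ r (t x) i = ((n : ℕ) : WithBot ℕ) := by
        intro n
        have h1 : r (t x) ≤ r (t (xn n)) := hr (ht (hle n))
        have h2 : r (t (xn n)) = xn n := hmax _ (hne n)
        have h3 := FlatNat.le_iff.mp (h1 i)
        rw [h2, hxni n] at h3
        exact h3
      rcases hcn 0 with h | h0
      · exact h
      rcases hcn 1 with h | h1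
      · exact h
      rw [h0] at h1
      exact absurd (WithBot.coe_injective h1) (by norm_num)
    · exact heq.symm
  -- t is injective, hence strictly monotone.
  have hinj : ∀ a b, t a = t b → a = b := by
    intro a b h
    have h' := key a
    rw [h, key b] at h'
    exact h'.symm
  -- Step 3: rank of t along the chain grows.
  have hchain : ∀ m, m ≤ k → rankAux (t ⊥) + m ≤ rankAux (t (chainAux k m)) := by
    intro m hm
    induction m with
    | zero => rw [chainAux_zero]; simp
    | succ n ih =>
      have hn : n ≤ k := Nat.le_of_succ_le hm
      have hlt : chainAux k n < chainAux k (n + 1) := chainAux_lt hm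
      have htlt : t (chainAux k n) < t (chainAux k (n + 1)) :=
        lt_of_le_of_ne (ht hlt.le) (fun h => hlt.ne (hinj _ _ h))
      have := rankAux_strictMono htlt
      have := ih hn
      omega
  have hfin := hchain k le_rfl
  have hle := rankAux_le (t (chainAux k k))
  have h0 : rankAux (t ⊥) = 0 := by omega
  refine ⟨funext fun x => key x, rankAux_eq_zero h0⟩
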